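/- Let K be a field of prime characteristic p, let i ≥ 2p + 1 be an integer, and let e ≥ 1 be the integer with p^e ≤ i < p^{e+1}. Assume i < p^{e+1} − p^e + p^{e−1}. Let W_i ⊆ K[X] be the K-linear span of {X^{j+p} : 0 ≤ j ≤ i−1} ∪ {X^j·(X^{p^{k+1}} + X^{p^{k−1}}) : k ≥ 1, 0 ≤ j, j + p^k ≤ i} ∪ {X^j : 0 ≤ j ≤ i−1−p}. Then dim_K W_i = (i − p^{e−1} + p^e + 1) + (i − p^e + 1) = 2i − p^{e−1} + 2. (Together with the (i+1)-dimensional space V_1 = K⟨x^j s_2 : 0 ≤ j ≤ i⟩ this gives Case 2 of Theorem 4.2: dim_K F_i s_2 = 3i − p^{e−1} + 3.) -/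

import Mathlib

open Polynomial

theorem dim_W_case2 (K : Type*) [Field K] (p : ℕ) [Fact p.Prime] [CharP K p]
    (e i : ℕ) (he : 1 ≤ e) (h1 : p ^ e ≤ i) (h2 : i < p ^ (e + 1))
    (hi : 2 * p + 1 ≤ i) (hc : i < p ^ (e + 1) - p ^ e + p ^ (e - 1)) :
    Module.finrank K
        (Submodule.span K
          ({f : K[X] | ∃ j : ℕ, j ≤ i - 1 ∧ f = X ^ (j + p)} ∪
            {f : K[X] | ∃ j k : ℕ, 1 ≤ k ∧ j + p ^ k ≤ i ∧
              f = X ^ j * (X ^ (p ^ (k + 1)) + X ^ (p ^ (k - 1)))} ∪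
            {f : K[X] | ∃ j : ℕ, j ≤ i - 1 - p ∧ f = X ^ j})) =
      (i - p ^ (e - 1) + p ^ e + 1) + (i - p ^ e + 1) := by
  have hp : 2 ≤ p := (Fact.out : p.Prime).two_le
  set G : Set K[X] :=
    ({f : K[X] | ∃ j : ℕ, j ≤ i - 1 ∧ f = X ^ (j + p)} ∪
      {f : K[X] | ∃ j k : ℕ, 1 ≤ k ∧ j + p ^ k ≤ i ∧
        f = X ^ j * (X ^ (p ^ (k + 1)) + X ^ (p ^ (k - 1)))} ∪
      {f : K[X] | ∃ j : ℕ, j ≤ i - 1 - p ∧ f = X ^ j}) with hG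
  -- numeric facts
  have hq01 : p ^ (e - 1) ≤ p ^ e := Nat.pow_le_pow_right (by omega) (by omega)
  have hq12 : p ^ e ≤ p ^ (e + 1) := Nat.pow_le_pow_right (by omega) (by omega)
  have hq0pos : 1 ≤ p ^ (e - 1) := Nat.one_le_pow _ _ (by omega)
  have hq1e : p ^ e = p ^ (e - 1) * p := by rw [← pow_succ]; congr 1; omega
  have hgap : p ^ (e - 1) + p ≤ p ^ e + 1 := by nlinarith
  set a : ℕ := i - p ^ (e - 1) + p ^ e with ha
  set b : ℕ := i - p ^ e + p ^ (e + 1) with hb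
  have hagap : a < p ^ (e + 1) := by omega
  set S : Finset ℕ := Finset.range (a + 1) ∪ Finset.Icc (p ^ (e + 1)) b with hS
  have hmemS : ∀ m : ℕ, m ∈ S ↔ (m ≤ a ∨ (p ^ (e + 1) ≤ m ∧ m ≤ b)) := by
    intro m
    simp only [hS, Finset.mem_union, Finset.mem_range, Finset.mem_Icc]
    omega
  -- the image set
  set T : Set K[X] := (fun m => (X : K[X]) ^ m) '' (S : Set ℕ) with hT
  have hXT : ∀ m : ℕ, (m ≤ a ∨ (p ^ (e + 1) ≤ m ∧ m ≤ b)) →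
      (X : K[X]) ^ m ∈ Submodule.span K T :=
    fun m hm => Submodule.subset_span ⟨m, by simpa using (hmemS m).2 hm, rfl⟩
  -- G ⊆ span T
  have hGT : G ⊆ (Submodule.span K T : Set K[X]) := by
    rintro f ((⟨j, hj, rfl⟩ | ⟨j, k, hk, hjk, rfl⟩) | ⟨j, hj, rfl⟩)
    · exact hXT _ (Or.inl (by omega))
    · have hid : (X : K[X]) ^ j * (X ^ p ^ (k + 1) + X ^ p ^ (k - 1)) =
          X ^ (j + p ^ (k + 1)) + X ^ (j + p ^ (k - 1)) := by
        rw [mul_add, ← pow_add, ← pow_add]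
      rw [hid]
      have hlt : p ^ (k - 1) < p ^ k := Nat.pow_lt_pow_right (by omega) (by omega)
      refine add_mem (hXT _ ?_) (hXT _ (Or.inl (by omega)))
      have hke : k ≤ e := by
        by_contra hcon
        have : p ^ (e + 1) ≤ p ^ k := Nat.pow_le_pow_right (by omega) (by omega)
        omega
      rcases eq_or_lt_of_le hke with rfl | hke'
      · exact Or.inr ⟨by omega, by omega⟩
      · have hkp : p ^ k ≤ p ^ (e - 1) := Nat.pow_le_pow_right (by omega) (by omega)
        have hk1 : p ^ (k + 1) = p ^ k * p := pow_succ p k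
        have hmono : p ^ (k + 1) + p ^ (e - 1) ≤ p ^ e + p ^ k := by
          rw [hk1, hq1e]
          have h3 := Nat.mul_le_mul_right (p - 1) hkp
          rw [Nat.mul_sub_one, Nat.mul_sub_one] at h3
          have h6 : p ^ k ≤ p ^ k * p := Nat.le_mul_of_pos_right _ (by omega)
          have h7 : p ^ (e - 1) ≤ p ^ (e - 1) * p := Nat.le_mul_of_pos_right _ (by omega)
          omega
        exact Or.inl (by omega)
    · exact hXT _ (Or.inl (by omega))
  -- monomials up to i - 1 + p lie in span G
  have hmonoG : ∀ m : ℕ, m ≤ i - 1 + p → (X : K[X]) ^ m ∈ Submodule.span K G := by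
    intro m hm
    by_cases h : m < p
    · exact Submodule.subset_span (Or.inr ⟨m, by omega, rfl⟩)
    · refine Submodule.subset_span (Or.inl (Or.inl ⟨m - p, by omega, ?_⟩))
      congr 1; omega
  have hkey : ∀ k j : ℕ, 1 ≤ k → j + p ^ k ≤ i →
      (X : K[X]) ^ (j + p ^ (k + 1)) ∈ Submodule.span K G := by
    intro k j hk hjk
    have hlt : p ^ (k - 1) < p ^ k := Nat.pow_lt_pow_right (by omega) (by omega)
    have hmem : (X : K[X]) ^ j * (X ^ p ^ (k + 1) + X ^ p ^ (k - 1)) ∈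
        Submodule.span K G :=
      Submodule.subset_span (Or.inl (Or.inr ⟨j, k, hk, hjk, rfl⟩))
    have h2' : (X : K[X]) ^ (j + p ^ (k - 1)) ∈ Submodule.span K G :=
      hmonoG _ (by omega)
    have hid : (X : K[X]) ^ (j + p ^ (k + 1)) =
        X ^ j * (X ^ p ^ (k + 1) + X ^ p ^ (k - 1)) - X ^ (j + p ^ (k - 1)) := by
      rw [mul_add, ← pow_add, ← pow_add, add_sub_cancel_right]
    rw [hid]
    exact sub_mem hmem h2'
  -- T ⊆ span G
  have hTG : T ⊆ (Submodule.span K G : Set K[X]) := by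
    rintro f ⟨m, hm, rfl⟩
    have hm' := (hmemS m).1 (by simpa using hm)
    rcases hm' with hm' | ⟨hm1, hm2⟩
    · by_cases h : m ≤ i - 1 + p
      · exact hmonoG m h
      · have he2 : 2 ≤ e := by
          rcases Nat.lt_or_ge e 2 with h' | h'
          · exfalso
            have : e = 1 := by omega
            subst this
            simp only [pow_one, pow_zero] at ha
            omega
          · exact h'
        have hpe : p ^ (e - 1 + 1) = p ^ e := by congr 1; omega
        have hres := hkey (e - 1) (m - p ^ e) (by omega) (by omega)
        rw [hpe] at hres
        have hmm : m - p ^ e + p ^ e = m := by omega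
        rwa [hmm] at hres
    · have hres := hkey e (m - p ^ (e + 1)) (by omega) (by omega)
      have hmm : m - p ^ (e + 1) + p ^ (e + 1) = m := by omega
      rwa [hmm] at hres
  have hspaneq : Submodule.span K G = Submodule.span K T :=
    le_antisymm (Submodule.span_le.2 hGT) (Submodule.span_le.2 hTG)
  rw [hspaneq]
  -- linear independence of monomials
  have hli : LinearIndependent K (fun m : (S : Set ℕ) => (X : K[X]) ^ (m : ℕ)) := by
    have h0 := (Polynomial.basisMonomials K).linearIndependent
    have h2' := h0.comp (fun m : (S : Set ℕ) => (m : ℕ)) (fun _ _ h => Subtype.ext h)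
    convert h2' using 1
    funext m
    simp [Polynomial.coe_basisMonomials, X_pow_eq_monomial]
  have himg : T = Set.range (fun m : (S : Set ℕ) => (X : K[X]) ^ (m : ℕ)) := by
    rw [hT, Set.image_eq_range]
  rw [himg, finrank_span_eq_card hli]
  have hdisj : Disjoint (Finset.range (a + 1)) (Finset.Icc (p ^ (e + 1)) b) := by
    rw [Finset.disjoint_left]
    intro m hm hm'
    simp only [Finset.mem_range] at hm
    simp only [Finset.mem_Icc] at hm'
    omega
  have : Fintype.card (S : Set ℕ) = S.card := Fintype.card_coe S
  rw [this, hS, Finset.card_union_of_disjoint hdisj, Finset.card_range, Nat.card_Icc]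
  omega
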